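/- If A, B ∈ GL(d, ℂ) satisfy AᵗB = BᵗA and A*B + B*A = 2·Id, then BA^{-1} is a complex symmetric matrix whose real (Hermitian) part equals (AA*)^{-1}; in particular Re(BA^{-1}) is Hermitian positive definite. -/

import Mathlib

open Matrix
open scoped ComplexOrder

lemma posDef_self_mul_conjTranspose_of_isUnit {d : ℕ} {A : Matrix (Fin d) (Fin d) ℂ}
    (hA : IsUnit A) : (A * Aᴴ).PosDef := by
  refine posDef_iff_dotProduct_mulVec.mpr ⟨isHermitian_mul_conjTranspose_self _, fun x hx => ?_⟩
  rw [← mulVec_mulVec, dotProduct_mulVec,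
    show star x ᵥ* A = star (Aᴴ *ᵥ x) by rw [star_mulVec, conjTranspose_conjTranspose],
    dotProduct_star_self_pos_iff]
  intro h
  apply hx
  have hAcdet : IsUnit (Aᴴ).det := by
    rw [det_conjTranspose]
    exact ((isUnit_iff_isUnit_det _).mp hA).star
  have := congrArg (fun v => (Aᴴ)⁻¹ *ᵥ v) h
  simpa [mulVec_mulVec, nonsing_inv_mul _ hAcdet] using this

/-- Under the compatibility conditions, `B A⁻¹` is complex symmetric and its real
(Hermitian) part equals `(A A*)⁻¹`; in particular it is Hermitian positive definite. -/
theorem BAinv_symmetric_posdef (d : ℕ) (A B : Matrix (Fin d) (Fin d) ℂ)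
    (hA : IsUnit A) (hB : IsUnit B)
    (h1 : Aᵀ * B = Bᵀ * A)
    (h2 : Aᴴ * B + Bᴴ * A = (2 : ℂ) • (1 : Matrix (Fin d) (Fin d) ℂ)) :
    (B * A⁻¹)ᵀ = B * A⁻¹ ∧
    (1 / 2 : ℂ) • (B * A⁻¹ + (B * A⁻¹)ᴴ) = (A * Aᴴ)⁻¹ ∧
    ((1 / 2 : ℂ) • (B * A⁻¹ + (B * A⁻¹)ᴴ)).PosDef := by
  have hAdet : IsUnit A.det := (isUnit_iff_isUnit_det _).mp hA
  have hAinv : A * A⁻¹ = 1 := mul_nonsing_inv _ hAdet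
  have hAtdet : IsUnit (Aᵀ).det := by rw [det_transpose]; exact hAdet
  have hAcdet : IsUnit (Aᴴ).det := by rw [det_conjTranspose]; exact hAdet.star
  have hAcinv : (Aᴴ)⁻¹ * Aᴴ = 1 := nonsing_inv_mul _ hAcdet
  have hsymm : (B * A⁻¹)ᵀ = B * A⁻¹ := by
    have hBt : Bᵀ = Aᵀ * B * A⁻¹ := by
      rw [h1, mul_assoc, hAinv, mul_one]
    rw [transpose_mul, transpose_nonsing_inv, hBt, ← mul_assoc, ← mul_assoc,
      nonsing_inv_mul _ hAtdet, one_mul]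
  have hre : (1 / 2 : ℂ) • (B * A⁻¹ + (B * A⁻¹)ᴴ) = (A * Aᴴ)⁻¹ := by
    have key : (Aᴴ)⁻¹ * (Aᴴ * B + Bᴴ * A) * A⁻¹
        = (Aᴴ)⁻¹ * ((2 : ℂ) • (1 : Matrix (Fin d) (Fin d) ℂ)) * A⁻¹ := by rw [h2]
    have lhs : (Aᴴ)⁻¹ * (Aᴴ * B + Bᴴ * A) * A⁻¹ = B * A⁻¹ + (B * A⁻¹)ᴴ := by
      rw [mul_add, add_mul, ← mul_assoc, ← mul_assoc, hAcinv, one_mul,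
        conjTranspose_mul, conjTranspose_nonsing_inv,
        mul_assoc ((Aᴴ)⁻¹ * Bᴴ), hAinv, mul_one]
    have rhs : (Aᴴ)⁻¹ * ((2 : ℂ) • (1 : Matrix (Fin d) (Fin d) ℂ)) * A⁻¹
        = (2 : ℂ) • (A * Aᴴ)⁻¹ := by
      rw [Matrix.mul_smul, mul_one, Matrix.smul_mul, Matrix.mul_inv_rev]
    rw [lhs, rhs] at key
    rw [key, smul_smul]
    norm_num
  refine ⟨hsymm, hre, ?_⟩
  rw [hre]
  exact (posDef_self_mul_conjTranspose_of_isUnit hA).inv
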